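/- arXiv:2307.05558 — 2 statements merged into one kernel-verified Lean document; each statement's English description precedes it below -/
import Mathlib

section
/- For λ > 0 and any real β, the Laplace density satisfies (λ/2)·exp(-λ|β|) = ∫₀^∞ (1/√(2πs))·exp(-β²/(2s)) · (λ²/2)·exp(-λ² s/2) ds, i.e., the Laplace distribution is a scale mixture of centered normals with exponentially distributed variance. -/
open MeasureTheory Real


lemma glasser_odd {c : ℝ} (hc : 0 < c) :
    ∫ u : ℝ, Real.exp (-u^2) * (u / Real.sqrt (u^2 + c)) = 0 := by
  have hden : ∀ u : ℝ, Real.sqrt (u^2 + c) ≠ 0 := fun u =>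
    ne_of_gt (Real.sqrt_pos.2 (by positivity))
  have hodd : ∀ u : ℝ, Real.exp (-(-u)^2) * ((-u) / Real.sqrt ((-u)^2 + c))
      = -(Real.exp (-u^2) * (u / Real.sqrt (u^2 + c))) := by
    intro u; simp only [neg_sq, neg_div, mul_neg]
  have h := MeasureTheory.integral_neg_eq_self
      (fun u : ℝ => Real.exp (-u^2) * (u / Real.sqrt (u^2 + c))) (volume : Measure ℝ)
  simp only [hodd] at h
  rw [integral_neg] at h
  linarith

lemma glasser_integrable_odd {c : ℝ} (hc : 0 < c) :
    Integrable (fun u : ℝ => Real.exp (-u^2) * (u / Real.sqrt (u^2 + c))) := by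
  have hint : Integrable (fun u : ℝ => Real.exp (-u^2)) := by
    simpa using integrable_exp_neg_mul_sq (one_pos)
  refine hint.mono ?_ (ae_of_all _ fun u => ?_)
  · apply Continuous.aestronglyMeasurable
    apply Continuous.mul
    · exact Real.continuous_exp.comp (by continuity)
    · apply Continuous.div continuous_id
      · exact Real.continuous_sqrt.comp (by continuity)
      · exact fun u => ne_of_gt (Real.sqrt_pos.2 (by positivity))
  · simp only [norm_mul, Real.norm_eq_abs, Real.abs_exp]
    have h1 : |u / Real.sqrt (u^2 + c)| ≤ 1 := by
      rw [abs_div, abs_of_nonneg (Real.sqrt_nonneg _), div_le_one (Real.sqrt_pos.2 (by positivity))]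
      calc |u| = Real.sqrt (u^2) := (Real.sqrt_sq_eq_abs u).symm
        _ ≤ Real.sqrt (u^2 + c) := Real.sqrt_le_sqrt (by linarith)
    nlinarith [Real.exp_pos (-u^2), abs_nonneg (u / Real.sqrt (u^2 + c))]

lemma glasser {a b : ℝ} (ha : 0 ≤ a) (hb : 0 < b) :
    ∫ t in Set.Ioi (0:ℝ), Real.exp (-(b*t - a/t)^2) = Real.sqrt π / (2*b) := by
  rcases ha.eq_or_lt with h0 | ha
  · subst h0
    simp only [zero_div, sub_zero]
    have h : ∀ t : ℝ, -(b*t)^2 = -b^2 * t^2 := fun t => by ring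
    simp_rw [h]
    rw [integral_gaussian_Ioi (b^2), Real.sqrt_div pi_pos.le,
      Real.sqrt_sq hb.le, div_div, mul_comm]
  · have hab : (0:ℝ) < 4*a*b := by positivity
    set f : ℝ → ℝ := fun t => b*t - a/t with hf
    set g : ℝ → ℝ := fun u => Real.exp (-u^2) * (1 + u / Real.sqrt (u^2 + 4*a*b)) / (2*b) with hg
    have hderiv : ∀ t ∈ Set.Ioi (0:ℝ), HasDerivWithinAt f (b + a/t^2) (Set.Ioi 0) t := by
      intro t ht
      have ht' : t ≠ 0 := ne_of_gt ht
      have h2 : HasDerivAt (fun t : ℝ => a / t) (a * -(t^2)⁻¹) t := by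
        simpa [div_eq_mul_inv] using (hasDerivAt_inv ht').const_mul a
      have h1 : HasDerivAt (fun t : ℝ => b * t) b t := by
        simpa using (hasDerivAt_id t).const_mul b
      have h3 := h1.sub h2
      have h4 : b - a * -(t^2)⁻¹ = b + a/t^2 := by field_simp; ring
      rw [h4] at h3
      exact h3.hasDerivWithinAt
    have hmono : StrictMonoOn f (Set.Ioi 0) := by
      intro t1 h1 t2 h2 h12
      have h1' : (0:ℝ) < t1 := h1
      have h2' : (0:ℝ) < t2 := h2
      have key : a/t2 ≤ a/t1 := by
        rw [div_le_div_iff₀ h2' h1']; nlinarith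
      have : b*t1 < b*t2 := by nlinarith
      simp only [hf]
      linarith
    have himg : f '' Set.Ioi 0 = Set.univ := by
      apply Set.eq_univ_of_forall
      intro u
      set s := Real.sqrt (u^2 + 4*a*b) with hs
      have hs2 : s^2 = u^2 + 4*a*b := Real.sq_sqrt (by positivity)
      have hsu : -u < s := by
        have h1 : |u| < s := by
          rw [hs, ← Real.sqrt_sq_eq_abs]
          exact Real.sqrt_lt_sqrt (sq_nonneg u) (by nlinarith)
        calc -u ≤ |u| := neg_le_abs u
          _ < s := h1
      have hus : 0 < u + s := by linarith
      refine ⟨(u + s)/(2*b), Set.mem_Ioi.2 (div_pos hus (by positivity)), ?_⟩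
      show b * ((u+s)/(2*b)) - a / ((u+s)/(2*b)) = u
      field_simp
      nlinarith [hs2]
    have hpt : ∀ t ∈ Set.Ioi (0:ℝ), |b + a/t^2| • g (f t) = Real.exp (-(b*t - a/t)^2) := by
      intro t ht
      have ht' : (0:ℝ) < t := ht
      have htne : t ≠ 0 := ne_of_gt ht'
      have hbt : 0 < b*t + a/t := by positivity
      have hsq : Real.sqrt ((b*t - a/t)^2 + 4*a*b) = b*t + a/t := by
        rw [show (b*t - a/t)^2 + 4*a*b = (b*t + a/t)^2 from by field_simp; ring]
        exact Real.sqrt_sq hbt.le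
      simp only [hg, hf, smul_eq_mul, hsq]
      rw [abs_of_pos (by positivity : (0:ℝ) < b + a/t^2)]
      have h2 : b*t + a/t ≠ 0 := ne_of_gt hbt
      field_simp
      ring
    have hcv := MeasureTheory.integral_image_eq_integral_abs_deriv_smul
      measurableSet_Ioi hderiv hmono.injOn g
    rw [himg, MeasureTheory.setIntegral_univ] at hcv
    have hint : Integrable (fun u : ℝ => Real.exp (-u^2)) := by
      simpa using integrable_exp_neg_mul_sq (one_pos)
    have hgint : ∫ u : ℝ, g u = Real.sqrt π / (2*b) := by
      have hsplit : ∀ u : ℝ, g u =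
          (Real.exp (-u^2) + Real.exp (-u^2) * (u / Real.sqrt (u^2 + 4*a*b))) / (2*b) := by
        intro u; simp only [hg]; ring
      simp_rw [hsplit]
      rw [integral_div, integral_add hint (glasser_integrable_odd hab),
        glasser_odd hab, add_zero]
      have hga : ∫ u : ℝ, Real.exp (-u^2) = Real.sqrt π := by
        simpa using integral_gaussian 1
      rw [hga]
    calc ∫ t in Set.Ioi (0:ℝ), Real.exp (-(b*t - a/t)^2)
        = ∫ t in Set.Ioi (0:ℝ), |b + a/t^2| • g (f t) :=
          (MeasureTheory.setIntegral_congr_fun measurableSet_Ioi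
            (fun t ht => (hpt t ht))).symm
      _ = ∫ u : ℝ, g u := hcv.symm
      _ = Real.sqrt π / (2*b) := hgint

theorem laplace_scale_mixture_of_normals (lam β : ℝ) (hlam : 0 < lam) :
    (lam / 2) * Real.exp (-lam * |β|) =
      ∫ s in Set.Ioi (0 : ℝ),
        (1 / Real.sqrt (2 * π * s)) * Real.exp (-β ^ 2 / (2 * s)) *
          ((lam ^ 2 / 2) * Real.exp (-lam ^ 2 * s / 2)) := by
  have h2 : (0:ℝ) < Real.sqrt 2 := Real.sqrt_pos.2 two_pos
  have h2sq : Real.sqrt 2 ^ 2 = 2 := Real.sq_sqrt (by norm_num)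
  set a : ℝ := |β| / Real.sqrt 2 with ha
  set b : ℝ := lam / Real.sqrt 2 with hb
  have ha0 : 0 ≤ a := div_nonneg (abs_nonneg β) h2.le
  have hb0 : 0 < b := div_pos hlam h2
  set F : ℝ → ℝ := fun s =>
    (1 / Real.sqrt (2 * π * s)) * Real.exp (-β ^ 2 / (2 * s)) *
      ((lam ^ 2 / 2) * Real.exp (-lam ^ 2 * s / 2)) with hF
  -- substitution s = t^2
  have hderiv : ∀ t ∈ Set.Ioi (0:ℝ), HasDerivWithinAt (fun t : ℝ => t^2) (2*t) (Set.Ioi 0) t := by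
    intro t ht
    simpa [mul_comm] using (hasDerivAt_pow 2 t).hasDerivWithinAt
  have hmono : StrictMonoOn (fun t : ℝ => t^2) (Set.Ioi 0) := by
    intro t1 h1 t2 h2 h12
    have h1' : (0:ℝ) < t1 := h1
    show t1^2 < t2^2
    nlinarith
  have himg : (fun t : ℝ => t^2) '' Set.Ioi 0 = Set.Ioi 0 := by
    ext x
    constructor
    · rintro ⟨t, ht, rfl⟩; exact Set.mem_Ioi.2 (pow_pos ht 2)
    · intro hx
      exact ⟨Real.sqrt x, Set.mem_Ioi.2 (Real.sqrt_pos.2 hx), Real.sq_sqrt (le_of_lt hx)⟩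
  have hcv := MeasureTheory.integral_image_eq_integral_abs_deriv_smul
    measurableSet_Ioi hderiv hmono.injOn F
  rw [himg] at hcv
  have hpt : ∀ t ∈ Set.Ioi (0:ℝ), |2*t| • F (t^2) =
      (lam^2 / Real.sqrt (2*π)) * Real.exp (-lam * |β|) * Real.exp (-(b*t - a/t)^2) := by
    intro t ht
    have ht' : (0:ℝ) < t := ht
    have htne : t ≠ 0 := ne_of_gt ht'
    have hsqrt : Real.sqrt (2 * π * t^2) = Real.sqrt (2*π) * t := by
      rw [Real.sqrt_mul (by positivity) (t^2), Real.sqrt_sq ht'.le]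
    have hexp : -β ^ 2 / (2 * t^2) + -lam ^ 2 * t^2 / 2
        = -lam * |β| + -(b*t - a/t)^2 := by
      have hb2 : b^2 = lam^2/2 := by rw [hb, div_pow, h2sq]
      have ha2 : a^2 = β^2/2 := by rw [ha, div_pow, h2sq, sq_abs]
      have hab2 : a*b = lam*|β|/2 := by
        rw [ha, hb, div_mul_div_comm, Real.mul_self_sqrt (by norm_num)]
        ring
      have hexpand : (b*t - a/t)^2 = b^2*t^2 - 2*(a*b) + a^2/t^2 := by
        field_simp; ring
      rw [hexpand, hb2, ha2, hab2]
      field_simp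
      ring
    simp only [hF, smul_eq_mul, hsqrt, abs_of_pos (by positivity : (0:ℝ) < 2*t)]
    rw [show (1 / (Real.sqrt (2*π) * t)) * Real.exp (-β ^ 2 / (2 * t^2)) *
        ((lam ^ 2 / 2) * Real.exp (-lam ^ 2 * t^2 / 2))
      = (lam^2 / 2) * (1 / (Real.sqrt (2*π) * t)) *
          Real.exp (-β ^ 2 / (2 * t^2) + -lam ^ 2 * t^2 / 2) from by
        rw [Real.exp_add]; ring]
    rw [hexp, Real.exp_add]
    have hs2p : Real.sqrt (2*π) ≠ 0 := ne_of_gt (Real.sqrt_pos.2 (by positivity))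
    field_simp
  have hglasser := glasser ha0 hb0
  have hfin : ∫ t in Set.Ioi (0:ℝ), |2*t| • F (t^2)
      = (lam^2 / Real.sqrt (2*π)) * Real.exp (-lam * |β|) * (Real.sqrt π / (2*b)) := by
    rw [MeasureTheory.setIntegral_congr_fun measurableSet_Ioi hpt,
      MeasureTheory.integral_const_mul, hglasser]
  rw [← hcv, hfin] at *
  -- final arithmetic
  have hsplit : Real.sqrt (2*π) = Real.sqrt 2 * Real.sqrt π :=
    Real.sqrt_mul (by norm_num) π
  have hπ : (0:ℝ) < Real.sqrt π := Real.sqrt_pos.2 pi_pos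
  rw [hsplit, hb]
  field_simp
end

section
/- If a probability measure π on ℝ^p has finite second moment, then the map θ ↦ E_{p_{t,θ}}[β], the mean of the exponentially tilted measure p_{t,θ}(dβ) ∝ exp(θᵀβ - (t/2)‖β‖²) π(dβ), is Lipschitz in θ with Lipschitz constant at most E_{p_{t,θ}}[‖β‖²] (pointwise: its Jacobian is the covariance matrix of p_{t,θ}, whose operator norm is bounded by the second moment of p_{t,θ}). -/
open MeasureTheory Real
open scoped RealInnerProductSpace

/-- The exponentially tilted measure `p_{t,θ}(dβ) ∝ exp(⟪θ,β⟫ - (t/2)‖β‖²) μ(dβ)`. -/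
noncomputable def tiltedMeasure {p : ℕ} (μ : Measure (EuclideanSpace ℝ (Fin p))) (t : ℝ)
    (θ : EuclideanSpace ℝ (Fin p)) : Measure (EuclideanSpace ℝ (Fin p)) :=
  (ENNReal.ofReal (∫ β, Real.exp (⟪θ, β⟫ - t / 2 * ‖β‖ ^ 2) ∂μ))⁻¹ •
    μ.withDensity (fun β => ENNReal.ofReal (Real.exp (⟪θ, β⟫ - t / 2 * ‖β‖ ^ 2)))

/-- Barycenter of the tilted measure. -/
noncomputable def tiltedMean {p : ℕ} (μ : Measure (EuclideanSpace ℝ (Fin p))) (t : ℝ)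
    (θ : EuclideanSpace ℝ (Fin p)) : EuclideanSpace ℝ (Fin p) :=
  ∫ β, β ∂(tiltedMeasure μ t θ)

section TiltedAux

open scoped ENNReal NNReal
set_option synthInstance.maxHeartbeats 1000000
set_option maxHeartbeats 1000000

noncomputable def tiltW {p : ℕ} (t : ℝ) (θ β : EuclideanSpace ℝ (Fin p)) : ℝ :=
  Real.exp (⟪θ, β⟫ - t / 2 * ‖β‖ ^ 2)

variable {p : ℕ} {t : ℝ} {μ : Measure (EuclideanSpace ℝ (Fin p))} [IsProbabilityMeasure μ]

lemma tiltW_pos (θ β : EuclideanSpace ℝ (Fin p)) : 0 < tiltW t θ β := Real.exp_pos _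

lemma tiltW_le (ht : 0 < t) (θ β : EuclideanSpace ℝ (Fin p)) :
    tiltW t θ β ≤ Real.exp (‖θ‖ ^ 2 / (2 * t)) := by
  refine Real.exp_le_exp.2 ?_
  have h1 : ⟪θ, β⟫ ≤ ‖θ‖ * ‖β‖ := real_inner_le_norm θ β
  rw [le_div_iff₀ (by positivity)]
  nlinarith [sq_nonneg (t * ‖β‖ - ‖θ‖), mul_le_mul_of_nonneg_right h1 (le_of_lt ht)]

lemma tiltW_cont (θ : EuclideanSpace ℝ (Fin p)) : Continuous (fun β => tiltW t θ β) :=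
  Real.continuous_exp.comp ((continuous_const.inner continuous_id).sub
    (continuous_const.mul (continuous_norm.pow 2)))

lemma tiltW_hasFDerivAt (β : EuclideanSpace ℝ (Fin p)) (x : EuclideanSpace ℝ (Fin p)) :
    HasFDerivAt (fun y => tiltW t y β) (tiltW t x β • innerSL ℝ β) x := by
  have h0 : HasFDerivAt (fun y : EuclideanSpace ℝ (Fin p) => ⟪y, β⟫ - t / 2 * ‖β‖ ^ 2)
      (innerSL ℝ β) x := by
    have h := ((innerSL ℝ β).hasFDerivAt (x := x)).sub_const (t / 2 * ‖β‖ ^ 2)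
    have heq : (fun y : EuclideanSpace ℝ (Fin p) => ⟪y, β⟫ - t / 2 * ‖β‖ ^ 2)
        = fun y => innerSL ℝ β y - t / 2 * ‖β‖ ^ 2 := by
      funext y; rw [innerSL_apply_apply, real_inner_comm]
    rw [heq]
    exact h
  exact h0.exp

lemma int_norm (hmom : Integrable (fun β => ‖β‖ ^ 2) μ) :
    Integrable (fun β : EuclideanSpace ℝ (Fin p) => ‖β‖) μ := by
  refine ((integrable_const (1 : ℝ)).add hmom).mono' (continuous_norm.aestronglyMeasurable) ?_
  refine Filter.Eventually.of_forall fun β => ?_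
  simp only [norm_norm, Pi.add_apply]
  nlinarith [sq_nonneg (‖β‖ - 1), norm_nonneg β]

lemma int_tiltW (ht : 0 < t) (θ : EuclideanSpace ℝ (Fin p)) :
    Integrable (fun β => tiltW t θ β) μ := by
  refine (integrable_const (Real.exp (‖θ‖ ^ 2 / (2 * t)))).mono'
    (tiltW_cont θ).aestronglyMeasurable ?_
  exact Filter.Eventually.of_forall fun β => by
    rw [Real.norm_eq_abs, abs_of_pos (tiltW_pos θ β)]; exact tiltW_le ht θ β

lemma tiltedMeasure_eq (θ : EuclideanSpace ℝ (Fin p)) :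
    tiltedMeasure μ t θ
    = (ENNReal.ofReal (∫ β, tiltW t θ β ∂μ))⁻¹ •
      μ.withDensity (fun β => ((tiltW t θ β).toNNReal : ℝ≥0∞)) := rfl

lemma Z_pos (ht : 0 < t) (θ : EuclideanSpace ℝ (Fin p)) :
    0 < ∫ β, tiltW t θ β ∂μ := by
  rw [integral_pos_iff_support_of_nonneg (fun β => (tiltW_pos θ β).le) (int_tiltW ht θ)]
  have : Function.support (fun β => tiltW t θ β) = Set.univ := by
    ext β; simp [Function.mem_support, (tiltW_pos (t := t) θ β).ne']
  rw [this]
  simp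

lemma integral_tilted {F : Type*} [NormedAddCommGroup F] [NormedSpace ℝ F]
    (θ : EuclideanSpace ℝ (Fin p)) (f : EuclideanSpace ℝ (Fin p) → F) :
    ∫ β, f β ∂(tiltedMeasure μ t θ)
    = (∫ β, tiltW t θ β ∂μ)⁻¹ • ∫ β, tiltW t θ β • f β ∂μ := by
  rw [tiltedMeasure_eq]
  have hm : Measurable fun β : EuclideanSpace ℝ (Fin p) => (tiltW t θ β).toNNReal :=
    (continuous_real_toNNReal.comp (tiltW_cont θ)).measurable
  rw [integral_smul_measure, integral_withDensity_eq_integral_smul hm f]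
  have h1 : ∀ β, ((tiltW t θ β).toNNReal : ℝ≥0) • f β = tiltW t θ β • f β := fun β => by
    rw [NNReal.smul_def, Real.coe_toNNReal _ (tiltW_pos θ β).le]
  simp_rw [h1]
  congr 1
  rw [ENNReal.toReal_inv, ENNReal.toReal_ofReal (integral_nonneg fun β => (tiltW_pos θ β).le)]

lemma ofRealZ_ne_zero (ht : 0 < t) (θ : EuclideanSpace ℝ (Fin p)) :
    (ENNReal.ofReal (∫ β, tiltW t θ β ∂μ)) ≠ 0 :=
  (ENNReal.ofReal_pos.2 (Z_pos ht θ)).ne'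

lemma integrable_tilted {F : Type*} [NormedAddCommGroup F] [NormedSpace ℝ F]
    (ht : 0 < t) (θ : EuclideanSpace ℝ (Fin p)) (f : EuclideanSpace ℝ (Fin p) → F) :
    Integrable f (tiltedMeasure μ t θ)
    ↔ Integrable (fun β => tiltW t θ β • f β) μ := by
  have hm : Measurable fun β : EuclideanSpace ℝ (Fin p) => (tiltW t θ β).toNNReal :=
    (continuous_real_toNNReal.comp (tiltW_cont θ)).measurable
  rw [tiltedMeasure_eq,
    integrable_smul_measure (by simp) (ENNReal.inv_ne_top.2 (ofRealZ_ne_zero ht θ)),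
    integrable_withDensity_iff_integrable_coe_smul hm]
  have : (fun β => ((tiltW t θ β).toNNReal : ℝ) • f β) = fun β => tiltW t θ β • f β := by
    funext β; rw [Real.coe_toNNReal _ (tiltW_pos θ β).le]
  rw [this]

lemma isProb_tilted (ht : 0 < t) (θ : EuclideanSpace ℝ (Fin p)) :
    IsProbabilityMeasure (tiltedMeasure μ t θ) := by
  constructor
  rw [tiltedMeasure_eq, Measure.smul_apply, withDensity_apply _ MeasurableSet.univ,
    setLIntegral_univ]
  have h1 : ∫⁻ β, ((tiltW t θ β).toNNReal : ℝ≥0∞) ∂μ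
      = ENNReal.ofReal (∫ β, tiltW t θ β ∂μ) := by
    rw [ofReal_integral_eq_lintegral_ofReal (int_tiltW ht θ)
      (Filter.Eventually.of_forall fun β => (tiltW_pos θ β).le)]
    rfl
  rw [h1, smul_eq_mul, ENNReal.inv_mul_cancel (ofRealZ_ne_zero ht θ) ENNReal.ofReal_ne_top]

lemma tiltW_ball_le (ht : 0 < t) {θ x : EuclideanSpace ℝ (Fin p)}
    (hx : x ∈ Metric.ball θ 1) (β : EuclideanSpace ℝ (Fin p)) :
    tiltW t x β ≤ Real.exp ((‖θ‖ + 1) ^ 2 / (2 * t)) := by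
  refine (tiltW_le ht x β).trans (Real.exp_le_exp.2 ?_)
  have h1 : ‖x‖ ≤ ‖θ‖ + 1 := by
    have h2 := mem_ball_iff_norm.1 hx
    have h3 := norm_sub_norm_le x θ
    linarith
  gcongr

lemma cont_innerSL_smul (θ : EuclideanSpace ℝ (Fin p)) :
    Continuous (fun β : EuclideanSpace ℝ (Fin p) => tiltW t θ β • innerSL ℝ β) :=
  (tiltW_cont θ).smul (innerSL ℝ).continuous

lemma cont_smulRight (θ : EuclideanSpace ℝ (Fin p)) :
    Continuous (fun β : EuclideanSpace ℝ (Fin p) =>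
      (tiltW t θ β • innerSL ℝ β).smulRight β) :=
  (isBoundedBilinearMap_smulRight (𝕜 := ℝ)).continuous.comp
    ((cont_innerSL_smul θ).prodMk continuous_id)

lemma norm_innerSL_smul (θ β : EuclideanSpace ℝ (Fin p)) :
    ‖tiltW t θ β • innerSL ℝ β‖ = tiltW t θ β * ‖β‖ := by
  rw [norm_smul (tiltW t θ β) ((innerSL ℝ) β), innerSL_apply_norm, Real.norm_eq_abs,
    abs_of_pos (tiltW_pos θ β)]

lemma norm_smulRight_tilt (θ β : EuclideanSpace ℝ (Fin p)) :
    ‖(tiltW t θ β • innerSL ℝ β).smulRight β‖ = tiltW t θ β * ‖β‖ ^ 2 := by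
  rw [ContinuousLinearMap.norm_smulRight_apply, norm_innerSL_smul]; ring

lemma int_tiltW_innerSL (ht : 0 < t) (hmom : Integrable (fun β => ‖β‖ ^ 2) μ)
    (θ : EuclideanSpace ℝ (Fin p)) :
    Integrable (fun β => tiltW t θ β • innerSL ℝ β) μ := by
  refine ((int_norm hmom).const_mul (Real.exp (‖θ‖ ^ 2 / (2 * t)))).mono'
    (cont_innerSL_smul θ).aestronglyMeasurable
    (Filter.Eventually.of_forall fun β => ?_)
  rw [norm_innerSL_smul]
  exact mul_le_mul_of_nonneg_right (tiltW_le ht θ β) (norm_nonneg β)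

lemma int_tiltW_smulRight (ht : 0 < t) (hmom : Integrable (fun β => ‖β‖ ^ 2) μ)
    (θ : EuclideanSpace ℝ (Fin p)) :
    Integrable (fun β => (tiltW t θ β • innerSL ℝ β).smulRight β) μ := by
  refine ((hmom.const_mul (Real.exp (‖θ‖ ^ 2 / (2 * t)))).mono'
    (cont_smulRight θ).aestronglyMeasurable
    (Filter.Eventually.of_forall fun β => ?_))
  rw [norm_smulRight_tilt]
  exact mul_le_mul_of_nonneg_right (tiltW_le ht θ β) (by positivity)

lemma int_tiltW_smul (ht : 0 < t) (hmom : Integrable (fun β => ‖β‖ ^ 2) μ)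
    (θ : EuclideanSpace ℝ (Fin p)) :
    Integrable (fun β => tiltW t θ β • β) μ := by
  refine ((int_norm hmom).const_mul (Real.exp (‖θ‖ ^ 2 / (2 * t)))).mono'
    ((tiltW_cont θ).smul continuous_id).aestronglyMeasurable
    (Filter.Eventually.of_forall fun β => ?_)
  rw [norm_smul, Real.norm_eq_abs, abs_of_pos (tiltW_pos θ β)]
  exact mul_le_mul_of_nonneg_right (tiltW_le ht θ β) (norm_nonneg β)

lemma int_tiltW_norm2 (ht : 0 < t) (hmom : Integrable (fun β => ‖β‖ ^ 2) μ)
    (θ : EuclideanSpace ℝ (Fin p)) :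
    Integrable (fun β => tiltW t θ β * ‖β‖ ^ 2) μ := by
  refine ((hmom.const_mul (Real.exp (‖θ‖ ^ 2 / (2 * t)))).mono'
    ((tiltW_cont θ).mul (continuous_norm.pow 2)).aestronglyMeasurable
    (Filter.Eventually.of_forall fun β => ?_))
  rw [Real.norm_eq_abs, abs_of_nonneg (mul_nonneg (tiltW_pos θ β).le (by positivity))]
  exact mul_le_mul_of_nonneg_right (tiltW_le ht θ β) (by positivity)

lemma hasFDerivAt_Z (ht : 0 < t) (hmom : Integrable (fun β => ‖β‖ ^ 2) μ)
    (θ : EuclideanSpace ℝ (Fin p)) :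
    HasFDerivAt (fun x => ∫ β, tiltW t x β ∂μ)
      (∫ β, tiltW t θ β • innerSL ℝ β ∂μ) θ := by
  refine hasFDerivAt_integral_of_dominated_of_fderiv_le
    (F' := fun x β => tiltW t x β • innerSL ℝ β)
    (bound := fun β => Real.exp ((‖θ‖ + 1) ^ 2 / (2 * t)) * ‖β‖) (Metric.ball_mem_nhds θ one_pos)
    (Filter.Eventually.of_forall fun x => (tiltW_cont x).aestronglyMeasurable)
    (int_tiltW ht θ) (cont_innerSL_smul θ).aestronglyMeasurable
    (Filter.Eventually.of_forall fun β x hx => ?_)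
    ((int_norm hmom).const_mul _)
    (Filter.Eventually.of_forall fun β x _ => tiltW_hasFDerivAt β x)
  rw [norm_innerSL_smul]
  exact mul_le_mul_of_nonneg_right (tiltW_ball_le ht hx β) (norm_nonneg β)

lemma hasFDerivAt_N (ht : 0 < t) (hmom : Integrable (fun β => ‖β‖ ^ 2) μ)
    (θ : EuclideanSpace ℝ (Fin p)) :
    HasFDerivAt (fun x => ∫ β, tiltW t x β • β ∂μ)
      (∫ β, (tiltW t θ β • innerSL ℝ β).smulRight β ∂μ) θ := by
  refine hasFDerivAt_integral_of_dominated_of_fderiv_le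
    (F' := fun x β => (tiltW t x β • innerSL ℝ β).smulRight β)
    (bound := fun β => Real.exp ((‖θ‖ + 1) ^ 2 / (2 * t)) * ‖β‖ ^ 2) (Metric.ball_mem_nhds θ one_pos)
    (Filter.Eventually.of_forall fun x =>
      ((tiltW_cont x).smul continuous_id).aestronglyMeasurable)
    (int_tiltW_smul ht hmom θ) (cont_smulRight θ).aestronglyMeasurable
    (Filter.Eventually.of_forall fun β x hx => ?_)
    (hmom.const_mul _)
    (Filter.Eventually.of_forall fun β x _ => (tiltW_hasFDerivAt β x).smul_const β)
  rw [norm_smulRight_tilt]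
  exact mul_le_mul_of_nonneg_right (tiltW_ball_le ht hx β) (by positivity)

end TiltedAux

set_option maxHeartbeats 2000000 in
theorem tilted_mean_lipschitz (p : ℕ) (μ : Measure (EuclideanSpace ℝ (Fin p)))
    [IsProbabilityMeasure μ] (t : ℝ) (ht : 0 < t)
    (hmom : Integrable (fun β => ‖β‖ ^ 2) μ) :
    ∀ θ : EuclideanSpace ℝ (Fin p),
      ∃ D : EuclideanSpace ℝ (Fin p) →L[ℝ] EuclideanSpace ℝ (Fin p),
        HasFDerivAt (tiltedMean μ t) D θ ∧
          ‖D‖ ≤ ∫ β, ‖β‖ ^ 2 ∂(tiltedMeasure μ t θ) := by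
  intro θ
  haveI hP : IsProbabilityMeasure (tiltedMeasure μ t θ) := isProb_tilted ht θ
  set Zθ : ℝ := ∫ β, tiltW t θ β ∂μ with hZθdef
  set Nθ : EuclideanSpace ℝ (Fin p) := ∫ β, tiltW t θ β • β ∂μ with hNθdef
  set Z' : EuclideanSpace ℝ (Fin p) →L[ℝ] ℝ := ∫ β, tiltW t θ β • innerSL ℝ β ∂μ with hZ'def
  set N' : EuclideanSpace ℝ (Fin p) →L[ℝ] EuclideanSpace ℝ (Fin p) :=
    ∫ β, (tiltW t θ β • innerSL ℝ β).smulRight β ∂μ with hN'def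
  have hZpos : 0 < Zθ := Z_pos ht θ
  -- the mean as a quotient of μ-integrals
  have hmean : tiltedMean μ t = fun x =>
      (∫ β, tiltW t x β ∂μ)⁻¹ • ∫ β, tiltW t x β • β ∂μ := by
    funext x
    exact integral_tilted x (fun β => β)
  -- derivative
  have hZd : HasFDerivAt (fun x => ∫ β, tiltW t x β ∂μ) Z' θ := hasFDerivAt_Z ht hmom θ
  have hNd : HasFDerivAt (fun x => ∫ β, tiltW t x β • β ∂μ) N' θ := hasFDerivAt_N ht hmom θ
  have hinv : HasFDerivAt (fun x => (∫ β, tiltW t x β ∂μ)⁻¹) ((-(Zθ ^ 2)⁻¹) • Z') θ :=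
    (hasDerivAt_inv hZpos.ne').comp_hasFDerivAt θ hZd
  have hD : HasFDerivAt (tiltedMean μ t)
      (Zθ⁻¹ • N' + ((-(Zθ ^ 2)⁻¹) • Z').smulRight Nθ) θ := by
    rw [hmean]
    exact hinv.smul hNd
  refine ⟨_, hD, ?_⟩
  -- now the norm bound
  set ν := tiltedMeasure μ t θ with hνdef
  set m : EuclideanSpace ℝ (Fin p) := ∫ β, β ∂ν with hmdef
  have hm : m = Zθ⁻¹ • Nθ := integral_tilted θ (fun β => β)
  set K : ℝ := ∫ β, ‖β‖ ^ 2 ∂ν with hKdef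
  -- integrabilities over ν
  have hν2 : Integrable (fun β => ‖β‖ ^ 2) ν := by
    rw [hνdef, integrable_tilted ht θ]
    simpa [smul_eq_mul] using int_tiltW_norm2 ht hmom θ
  have hνid : Integrable (fun β => β) ν := by
    rw [hνdef, integrable_tilted ht θ]
    exact int_tiltW_smul ht hmom θ
  have hνinner : ∀ u : EuclideanSpace ℝ (Fin p), Integrable (fun β => ⟪β, u⟫) ν := by
    intro u
    refine (((integrable_const (1:ℝ)).add hν2).const_mul ‖u‖).mono'
      ((continuous_id.inner continuous_const).aestronglyMeasurable)
      (Filter.Eventually.of_forall fun β => ?_)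
    rw [Real.norm_eq_abs]
    have h1 := abs_real_inner_le_norm β u
    have h2 : ‖β‖ ≤ 1 + ‖β‖ ^ 2 := by nlinarith [sq_nonneg (‖β‖ - 1), norm_nonneg β]
    calc |⟪β, u⟫| ≤ ‖β‖ * ‖u‖ := h1
      _ ≤ (1 + ‖β‖ ^ 2) * ‖u‖ := by gcongr
      _ = ‖u‖ * (1 + ‖β‖ ^ 2) := by ring
  have hνinner_smul : ∀ u : EuclideanSpace ℝ (Fin p),
      Integrable (fun β => ⟪β, u⟫ • β) ν := by
    intro u
    refine (hν2.const_mul ‖u‖).mono'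
      (by fun_prop : Continuous fun β : EuclideanSpace ℝ (Fin p) => ⟪β, u⟫ • β).aestronglyMeasurable
      (Filter.Eventually.of_forall fun β => ?_)
    rw [norm_smul, Real.norm_eq_abs]
    calc |⟪β, u⟫| * ‖β‖ ≤ (‖β‖ * ‖u‖) * ‖β‖ := by
          gcongr; exact abs_real_inner_le_norm β u
      _ = ‖u‖ * ‖β‖ ^ 2 := by ring
  have hνmean : ∀ u : EuclideanSpace ℝ (Fin p), ∫ β, ⟪β, u⟫ ∂ν = ⟪m, u⟫ := by
    intro u
    calc ∫ β, ⟪β, u⟫ ∂ν = ∫ β, ⟪u, β⟫ ∂ν := by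
          congr 1; funext β; rw [real_inner_comm]
      _ = ⟪u, m⟫ := integral_inner hνid u
      _ = ⟪m, u⟫ := real_inner_comm m u
  -- applying the derivative to a vector
  have happly : ∀ v, (Zθ⁻¹ • N' + ((-(Zθ ^ 2)⁻¹) • Z').smulRight Nθ) v
      = (∫ β, ⟪β, v⟫ • β ∂ν) - ⟪m, v⟫ • m := by
    intro v
    have hNv : N' v = ∫ β, (tiltW t θ β * ⟪β, v⟫) • β ∂μ := by
      rw [hN'def, ContinuousLinearMap.integral_apply (int_tiltW_smulRight ht hmom θ)]
      congr 1
    have hZv : Z' v = ∫ β, tiltW t θ β * ⟪β, v⟫ ∂μ := by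
      rw [hZ'def, ContinuousLinearMap.integral_apply (int_tiltW_innerSL ht hmom θ)]
      congr 1
    have hIv : ∫ β, ⟪β, v⟫ • β ∂ν = Zθ⁻¹ • ∫ β, (tiltW t θ β * ⟪β, v⟫) • β ∂μ := by
      have h2 : ∫ β, tiltW t θ β • (⟪β, v⟫ • β) ∂μ
          = ∫ β, (tiltW t θ β * ⟪β, v⟫) • β ∂μ :=
        integral_congr_ae (Filter.Eventually.of_forall fun β => smul_smul _ _ _)
      rw [hνdef, integral_tilted θ (fun β => ⟪β, v⟫ • β), h2]
    have hNv' : ⟪Nθ, v⟫ = Z' v := by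
      rw [hZv, hNθdef, real_inner_comm, ← integral_inner (int_tiltW_smul ht hmom θ) v]
      exact integral_congr_ae (Filter.Eventually.of_forall fun β => by
        show ⟪v, tiltW t θ β • β⟫ = tiltW t θ β * ⟪β, v⟫
        rw [real_inner_smul_right, real_inner_comm])
    simp only [ContinuousLinearMap.add_apply, ContinuousLinearMap.coe_smul', Pi.smul_apply,
      ContinuousLinearMap.smulRight_apply]
    rw [hIv, ← hNv, hm, real_inner_smul_left, hNv']
    have halg : ((-(Zθ ^ 2)⁻¹ • Z' v) • Nθ : EuclideanSpace ℝ (Fin p))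
        = -((Zθ⁻¹ * Z' v) • (Zθ⁻¹ • Nθ)) := by
      rw [smul_smul, ← neg_smul]
      congr 1
      rw [smul_eq_mul, pow_two, mul_inv]
      ring
    rw [halg, sub_eq_add_neg]
  -- centering identity
  have hcent : ∀ v, (∫ β, ⟪β, v⟫ • β ∂ν) - ⟪m, v⟫ • m
      = ∫ β, ⟪β - m, v⟫ • (β - m) ∂ν := by
    intro v
    have hexp : (fun β => ⟪β - m, v⟫ • (β - m))
        = fun β => (⟪β, v⟫ • β - ⟪β, v⟫ • m) - (⟪m, v⟫ • β - ⟪m, v⟫ • m) := by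
      funext β
      rw [inner_sub_left, sub_smul, smul_sub, smul_sub]
    have i2 : Integrable (fun β => ⟪β, v⟫ • m) ν := (hνinner v).smul_const m
    have i3 : Integrable (fun β => ⟪m, v⟫ • β) ν := hνid.smul (⟪m, v⟫ : ℝ)
    have i4 : Integrable (fun β : EuclideanSpace ℝ (Fin p) => ⟪m, v⟫ • m) ν :=
      integrable_const _
    have i1 : Integrable (fun β => ⟪β, v⟫ • β - ⟪β, v⟫ • m) ν := (hνinner_smul v).sub i2
    have i5 : Integrable (fun β => ⟪m, v⟫ • β - ⟪m, v⟫ • m) ν := i3.sub i4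
    rw [hexp, integral_sub i1 i5,
      integral_sub (hνinner_smul v) i2,
      integral_sub i3 i4,
      integral_smul_const, integral_smul, integral_const, probReal_univ,
      one_smul, hνmean v, ← hmdef]
    abel
  -- variance bound
  have hsubnorm : (fun β : EuclideanSpace ℝ (Fin p) => ‖β - m‖ ^ 2)
      = fun β => ‖β‖ ^ 2 - 2 * ⟪β, m⟫ + ‖m‖ ^ 2 := by
    funext β; rw [norm_sub_sq_real]
  have hsub2 : Integrable (fun β => ‖β - m‖ ^ 2) ν := by
    rw [hsubnorm]
    exact (hν2.sub ((hνinner m).const_mul 2)).add (integrable_const _)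
  have hvar : ∫ β, ‖β - m‖ ^ 2 ∂ν ≤ K := by
    have j2 : Integrable (fun β => 2 * ⟪β, m⟫) ν := (hνinner m).const_mul 2
    have j1 : Integrable (fun β => ‖β‖ ^ 2 - 2 * ⟪β, m⟫) ν := hν2.sub j2
    rw [hsubnorm, integral_add j1 (integrable_const _),
      integral_sub hν2 j2, integral_const_mul, hνmean m,
      integral_const, probReal_univ, smul_eq_mul, one_mul,
      real_inner_self_eq_norm_sq]
    rw [hKdef]
    nlinarith [sq_nonneg ‖m‖]
  have hK0 : 0 ≤ K := integral_nonneg fun β => by positivity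
  refine ContinuousLinearMap.opNorm_le_bound _ hK0 fun v => ?_
  rw [happly v, hcent v]
  calc ‖∫ β, ⟪β - m, v⟫ • (β - m) ∂ν‖ ≤ ∫ β, ‖β - m‖ ^ 2 * ‖v‖ ∂ν := by
        refine norm_integral_le_of_norm_le (hsub2.mul_const ‖v‖)
          (Filter.Eventually.of_forall fun β => ?_)
        rw [norm_smul, Real.norm_eq_abs]
        calc |⟪β - m, v⟫| * ‖β - m‖ ≤ (‖β - m‖ * ‖v‖) * ‖β - m‖ := by
              gcongr; exact abs_real_inner_le_norm _ _
          _ = ‖β - m‖ ^ 2 * ‖v‖ := by ring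
    _ = (∫ β, ‖β - m‖ ^ 2 ∂ν) * ‖v‖ := integral_mul_const _ _
    _ ≤ K * ‖v‖ := mul_le_mul_of_nonneg_right hvar (norm_nonneg v)
end
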